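/- arXiv:1503.03218 — 2 statements merged into one kernel-verified Lean document; each statement's English description precedes it below -/
import Mathlib

section
/- Let N ≥ 2 and g : ℝ → ℝ with |g(s)| ≤ L₀|s| for all s and some L₀ > 0. Suppose (μₙ, yₙ) are solutions of -(r^{N-1} yₙ')' = μₙ r^{N-1} g(yₙ) on (0,1) with yₙ'(0) = yₙ'(1) = 0 and |μₙ| ≤ μ̂. If ‖yₙ'‖_∞ → ∞, then ‖yₙ‖_∞ → ∞. -/
open Filter Topology

/-- If the sup norms of `yₙ'` blow up then so do the sup norms of
`yₙ`. -/
theorem stmt_7 (N : ℕ) (hN : 2 ≤ N) (g : ℝ → ℝ) (L₀ : ℝ) (hL₀ : 0 < L₀)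
    (hg : ∀ s : ℝ, |g s| ≤ L₀ * |s|)
    (μhat : ℝ) (μ : ℕ → ℝ) (hμ : ∀ n, |μ n| ≤ μhat)
    (y : ℕ → ℝ → ℝ)
    (hy_reg : ∀ n, ContDiffOn ℝ 1 (y n) (Set.Icc 0 1) ∧
      ContDiffOn ℝ 2 (y n) (Set.Ioc 0 1))
    (hbc : ∀ n, deriv (y n) 0 = 0 ∧ deriv (y n) 1 = 0)
    (hode : ∀ n, ∀ r ∈ Set.Ioo (0:ℝ) 1,
      -(deriv (fun s => s ^ (N - 1) * deriv (y n) s) r)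
        = μ n * r ^ (N - 1) * g (y n r))
    (hblow : Tendsto (fun n => sSup ((fun r => |deriv (y n) r|) '' Set.Icc (0:ℝ) 1))
      atTop atTop) :
    Tendsto (fun n => sSup ((fun r => |y n r|) '' Set.Icc (0:ℝ) 1)) atTop atTop := by
  have hμ0 : 0 ≤ μhat := le_trans (abs_nonneg _) (hμ 0)
  set C : ℝ := μhat * L₀ + 1 with hCdef
  have hC : 0 < C := by positivity
  have key : ∀ n, sSup ((fun r => |deriv (y n) r|) '' Set.Icc (0:ℝ) 1)
      ≤ C * sSup ((fun r => |y n r|) '' Set.Icc (0:ℝ) 1) := by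
    intro n
    obtain ⟨hy1, hy2⟩ := hy_reg n
    have hycont : ContinuousOn (y n) (Set.Icc 0 1) := hy1.continuousOn
    set M := sSup ((fun r => |y n r|) '' Set.Icc (0:ℝ) 1) with hM
    have hbdd : BddAbove ((fun r => |y n r|) '' Set.Icc (0:ℝ) 1) :=
      (isCompact_Icc.image_of_continuousOn hycont.abs).bddAbove
    have hMle : ∀ r ∈ Set.Icc (0:ℝ) 1, |y n r| ≤ M := fun r hr =>
      le_csSup hbdd ⟨r, hr, rfl⟩
    have hM0 : 0 ≤ M := le_trans (abs_nonneg _) (hMle 0 ⟨le_refl _, zero_le_one⟩)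
    -- pointwise bound on the derivative
    have hpt : ∀ r ∈ Set.Icc (0:ℝ) 1, |deriv (y n) r| ≤ C * M := by
      intro r hr
      rcases eq_or_lt_of_le hr.1 with h0 | h0
      · rw [← h0, (hbc n).1, abs_zero]; positivity
      rcases eq_or_lt_of_le hr.2 with h1 | h1
      · rw [h1, (hbc n).2, abs_zero]; positivity
      -- now r ∈ Ioo 0 1
      set f := derivWithin (y n) (Set.Icc (0:ℝ) 1) with hf
      have hfc : ContinuousOn f (Set.Icc 0 1) :=
        hy1.continuousOn_derivWithin (uniqueDiffOn_Icc one_pos) le_rfl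
      have hfeq : ∀ s ∈ Set.Ioo (0:ℝ) 1, f s = deriv (y n) s := fun s hs =>
        derivWithin_of_mem_nhds (Icc_mem_nhds hs.1 hs.2)
      set H : ℝ → ℝ := fun s => s ^ (N - 1) * deriv (y n) s with hH
      have hNpos : N - 1 ≠ 0 := by omega
      have hderivy : ContDiffOn ℝ 1 (deriv (y n)) (Set.Ioo 0 1) :=
        (hy2.mono Set.Ioo_subset_Ioc_self).deriv_of_isOpen isOpen_Ioo (by norm_num)
      have hdiffH : ∀ s ∈ Set.Ioo (0:ℝ) 1, DifferentiableAt ℝ H s := by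
        intro s hs
        have hd : DifferentiableAt ℝ (deriv (y n)) s :=
          ((hderivy.differentiableOn one_ne_zero) s hs).differentiableAt
            (isOpen_Ioo.mem_nhds hs)
        exact (differentiableAt_pow _).mul hd
      set Cr : ℝ := μhat * L₀ * M * r ^ (N - 1) with hCr
      have hCr0 : 0 ≤ Cr := by positivity
      have hder_bound : ∀ s ∈ Set.Ioc (0:ℝ) r, |deriv H s| ≤ Cr := by
        intro s hs
        have hsI : s ∈ Set.Ioo (0:ℝ) 1 := ⟨hs.1, lt_of_le_of_lt hs.2 h1⟩
        have hode' := hode n s hsI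
        have hdH : deriv H s = -(μ n * s ^ (N - 1) * g (y n s)) := by
          rw [← hode']; ring
        rw [hdH, abs_neg]
        have h1' : |μ n * s ^ (N - 1) * g (y n s)| = |μ n| * s ^ (N - 1) * |g (y n s)| := by
          rw [abs_mul, abs_mul, abs_pow, abs_of_pos hs.1]
        rw [h1']
        have hgb : |g (y n s)| ≤ L₀ * M :=
          le_trans (hg _) (mul_le_mul_of_nonneg_left
            (hMle s ⟨le_of_lt hsI.1, le_of_lt hsI.2⟩) hL₀.le)
        have hsp : s ^ (N - 1) ≤ r ^ (N - 1) := pow_le_pow_left₀ hs.1.le hs.2 _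
        calc |μ n| * s ^ (N - 1) * |g (y n s)|
            ≤ μhat * r ^ (N - 1) * (L₀ * M) := by
              apply mul_le_mul _ hgb (abs_nonneg _) (by positivity)
              exact mul_le_mul (hμ n) hsp (pow_nonneg hs.1.le _) hμ0
          _ = Cr := by rw [hCr]; ring
      have hmvt : ∀ a ∈ Set.Ioc (0:ℝ) r, |H r - H a| ≤ Cr * |r - a| := by
        intro a ha
        have := Convex.norm_image_sub_le_of_norm_hasDerivWithin_le
          (f := H) (f' := fun s => deriv H s) (C := Cr) (s := Set.Ioc 0 r)
          (fun s hs => ((hdiffH s ⟨hs.1, lt_of_le_of_lt hs.2 h1⟩).hasDerivAt).hasDerivWithinAt)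
          (fun s hs => by simpa [Real.norm_eq_abs] using hder_bound s hs)
          (convex_Ioc _ _) ha ⟨h0, le_refl r⟩
        simpa [Real.norm_eq_abs] using this
      have hsub : Set.Ioc (0:ℝ) r ⊆ Set.Icc (0:ℝ) 1 := fun x hx =>
        ⟨hx.1.le, le_trans hx.2 h1.le⟩
      haveI hne : (𝓝[Set.Ioc (0:ℝ) r] (0:ℝ)).NeBot := by
        refine mem_closure_iff_nhdsWithin_neBot.mp ?_
        rw [closure_Ioc h0.ne]
        exact ⟨le_refl _, h0.le⟩
      have hlim : Tendsto (fun a => |a ^ (N - 1) * f a| + Cr * r)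
          (𝓝[Set.Ioc (0:ℝ) r] 0) (𝓝 (Cr * r)) := by
        have hc : ContinuousWithinAt (fun a => |a ^ (N - 1) * f a|)
            (Set.Icc (0:ℝ) 1) 0 :=
          (((continuous_pow (N - 1)).continuousWithinAt).mul
            (hfc 0 ⟨le_refl _, zero_le_one⟩)).abs
        have hc' := (hc.mono hsub).add (continuousWithinAt_const : ContinuousWithinAt (fun _ => Cr * r) _ _)
        have h0v : |(0:ℝ) ^ (N - 1) * f 0| + Cr * r = Cr * r := by
          rw [zero_pow hNpos]; simp
        simpa only [Pi.add_def, h0v] using hc'.tendsto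
      have hub : |H r| ≤ Cr * r := by
        refine ge_of_tendsto hlim ?_
        filter_upwards [self_mem_nhdsWithin] with a ha
        have haI : a ∈ Set.Ioo (0:ℝ) 1 := ⟨ha.1, lt_of_le_of_lt ha.2 h1⟩
        have h3 := hmvt a ha
        have h4 : |H r| ≤ |H a| + Cr * |r - a| := by
          have := abs_sub_abs_le_abs_sub (H r) (H a)
          linarith
        have h5 : |r - a| ≤ r := by
          rw [abs_of_nonneg (by linarith [ha.2])]
          linarith [ha.1]
        have h6 : H a = a ^ (N - 1) * f a := by rw [hfeq a haI]
        calc |H r| ≤ |H a| + Cr * |r - a| := h4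
          _ ≤ |a ^ (N - 1) * f a| + Cr * r := by
              rw [h6]
              have := mul_le_mul_of_nonneg_left h5 hCr0
              linarith
      have hrp : (0:ℝ) < r ^ (N - 1) := pow_pos h0 _
      have h5 : r ^ (N - 1) * |deriv (y n) r| ≤ (μhat * L₀ * M) * r ^ (N - 1) := by
        have hHr : |H r| = r ^ (N - 1) * |deriv (y n) r| := by
          rw [hH]; rw [abs_mul, abs_of_pos hrp]
        calc r ^ (N - 1) * |deriv (y n) r| = |H r| := hHr.symm
          _ ≤ Cr * r := hub
          _ ≤ Cr := mul_le_of_le_one_right hCr0 h1.le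
          _ = (μhat * L₀ * M) * r ^ (N - 1) := by rw [hCr]
      have h7 : |deriv (y n) r| ≤ μhat * L₀ * M := by
        rw [mul_comm (μhat * L₀ * M) _] at h5
        exact (mul_le_mul_iff_right₀ hrp).mp h5
      have : μhat * L₀ * M ≤ C * M := by
        rw [hCdef]; nlinarith
      linarith
    refine Real.sSup_le ?_ (by positivity)
    rintro x ⟨r, hr, rfl⟩
    exact hpt r hr
  have h1 : Tendsto (fun n =>
      sSup ((fun r => |deriv (y n) r|) '' Set.Icc (0:ℝ) 1) / C) atTop atTop :=
    hblow.atTop_div_const hC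
  refine tendsto_atTop_mono (fun n => ?_) h1
  rw [div_le_iff₀ hC]
  calc sSup ((fun r => |deriv (y n) r|) '' Set.Icc (0:ℝ) 1)
      ≤ C * sSup ((fun r => |y n r|) '' Set.Icc (0:ℝ) 1) := key n
    _ = sSup ((fun r => |y n r|) '' Set.Icc (0:ℝ) 1) * C := mul_comm _ _
end

section
/- Let N ≥ 2, g : ℝ → ℝ with |g(s)| ≤ L₀|s|, |μ| ≤ μ̂, and let y ∈ C¹[0,1] ∩ C²(0,1] satisfy -(r^{N-1} y')' = μ r^{N-1} g(y) on (0,1] with y'(0) = 0. Then ‖y'‖_∞ ≤ μ̂ L₀ ‖y‖_∞, where ‖·‖_∞ is the sup norm on [0,1]. -/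
/-- A priori bound `‖y'‖_∞ ≤ μ̂ L₀ ‖y‖_∞` for solutions of the
self-adjoint equation with Neumann condition at `0`. -/
theorem stmt_8 (N : ℕ) (hN : 2 ≤ N) (g : ℝ → ℝ) (L₀ : ℝ) (hL₀ : 0 < L₀)
    (hg : ∀ s : ℝ, |g s| ≤ L₀ * |s|)
    (μ μhat : ℝ) (hμ : |μ| ≤ μhat)
    (y : ℝ → ℝ)
    (hy_reg : ContDiffOn ℝ 1 y (Set.Icc 0 1) ∧ ContDiffOn ℝ 2 y (Set.Ioc 0 1))
    (hbc : deriv y 0 = 0)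
    (hode : ∀ r ∈ Set.Ioc (0:ℝ) 1,
      -(deriv (fun s => s ^ (N - 1) * deriv y s) r) = μ * r ^ (N - 1) * g (y r)) :
    ∀ r ∈ Set.Icc (0:ℝ) 1,
      |deriv y r| ≤ μhat * L₀ * sSup ((fun s => |y s|) '' Set.Icc (0:ℝ) 1) := by
  obtain ⟨hy1, hy2⟩ := hy_reg
  set M := sSup ((fun s => |y s|) '' Set.Icc (0:ℝ) 1) with hMdef
  have hycont : ContinuousOn y (Set.Icc 0 1) := hy1.continuousOn
  have hbdd : BddAbove ((fun s => |y s|) '' Set.Icc (0:ℝ) 1) :=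
    isCompact_Icc.bddAbove_image hycont.abs
  have hMle : ∀ t ∈ Set.Icc (0:ℝ) 1, |y t| ≤ M := fun t ht =>
    le_csSup hbdd ⟨t, ht, rfl⟩
  have hM0 : 0 ≤ M := le_trans (abs_nonneg _) (hMle 0 ⟨le_refl 0, zero_le_one⟩)
  have hμhat : 0 ≤ μhat := le_trans (abs_nonneg μ) hμ
  set C := μhat * L₀ * M with hCdef
  have hC : 0 ≤ C := by positivity
  have hN1 : 1 ≤ N - 1 := by omega
  -- the within-derivative, which is continuous on [0,1]
  set d := derivWithin y (Set.Icc (0:ℝ) 1) with hddef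
  have hdcont : ContinuousOn d (Set.Icc 0 1) :=
    hy1.continuousOn_derivWithin (uniqueDiffOn_Icc zero_lt_one) le_rfl
  set F := fun s : ℝ => s ^ (N - 1) * d s with hFdef
  have hFcont : ContinuousOn F (Set.Icc 0 1) :=
    (continuousOn_pow _).mul hdcont
  have hdeq : ∀ t ∈ Set.Ioo (0:ℝ) 1, d t = deriv y t := fun t ht =>
    derivWithin_of_mem_nhds (Icc_mem_nhds ht.1 ht.2)
  -- C² regularity on the open interval
  have hy2' : ContDiffOn ℝ 2 y (Set.Ioo 0 1) := hy2.mono Set.Ioo_subset_Ioc_self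
  have hderiv_diff : ∀ t ∈ Set.Ioo (0:ℝ) 1, DifferentiableAt ℝ (deriv y) t := by
    intro t ht
    have := (hy2'.deriv_of_isOpen (m := 1) isOpen_Ioo (by norm_num)).differentiableOn one_ne_zero
    exact (this t ht).differentiableAt (isOpen_Ioo.mem_nhds ht)
  -- the right-hand side
  set h : ℝ → ℝ := fun t => -(μ * t ^ (N - 1) * g (y t)) with hhdef
  have hbound : ∀ t ∈ Set.Ioc (0:ℝ) 1, |h t| ≤ C * t ^ (N - 1) := by
    intro t ht
    have ht0 : (0:ℝ) ≤ t := le_of_lt ht.1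
    have hyt : |y t| ≤ M := hMle t ⟨ht0, ht.2⟩
    have habs : |h t| = |μ| * t ^ (N - 1) * |g (y t)| := by
      simp only [hhdef, abs_neg, abs_mul, abs_pow, abs_of_nonneg ht0]
    rw [habs, hCdef]
    have h1 : |g (y t)| ≤ L₀ * M := le_trans (hg (y t)) (by nlinarith)
    have h2 : (0:ℝ) ≤ t ^ (N - 1) := pow_nonneg ht0 _
    have h3 : |μ| * |g (y t)| ≤ μhat * (L₀ * M) :=
      mul_le_mul hμ h1 (abs_nonneg _) hμhat
    nlinarith [mul_le_mul_of_nonneg_right h3 h2]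
  -- the key estimate for r in (0,1]
  have key : ∀ r ∈ Set.Ioc (0:ℝ) 1, |d r| ≤ C := by
    intro r hr
    have hr0 : (0:ℝ) < r := hr.1
    have hr1 : r ≤ 1 := hr.2
    -- F has derivative h on (0, r)
    have hFderiv : ∀ t ∈ Set.Ioo (0:ℝ) r, HasDerivAt F (h t) t := by
      intro t ht
      have ht' : t ∈ Set.Ioo (0:ℝ) 1 := ⟨ht.1, lt_of_lt_of_le ht.2 hr1⟩
      have hdiff : DifferentiableAt ℝ (fun s => s ^ (N - 1) * deriv y s) t :=
        (differentiableAt_pow _).mul (hderiv_diff t ht')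
      have heq : F =ᶠ[nhds t] (fun s => s ^ (N - 1) * deriv y s) := by
        filter_upwards [isOpen_Ioo.mem_nhds ht'] with s hs
        simp only [hFdef, hdeq s hs]
      have hDF : deriv (fun s => s ^ (N - 1) * deriv y s) t = h t := by
        show _ = -(μ * t ^ (N - 1) * g (y t))
        have := hode t ⟨ht'.1, le_of_lt ht'.2⟩
        linarith
      have h1 := hdiff.hasDerivAt
      rw [hDF] at h1
      exact h1.congr_of_eventuallyEq heq
    -- integrability of h
    have hmeas : MeasureTheory.AEStronglyMeasurable h
        (MeasureTheory.volume.restrict (Set.Ioc 0 r)) := by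
      have hae : (deriv F) =ᵐ[MeasureTheory.volume.restrict (Set.Ioc 0 r)] h := by
        have hr' : ∀ᵐ x ∂(MeasureTheory.volume.restrict (Set.Ioc (0:ℝ) r)), x ≠ r := by
          refine MeasureTheory.ae_restrict_of_ae ?_
          rw [MeasureTheory.ae_iff]
          simp [not_not, Set.setOf_eq_eq_singleton, Real.volume_singleton]
        filter_upwards [MeasureTheory.ae_restrict_mem measurableSet_Ioc, hr'] with x hx hxr
        have hx' : x ∈ Set.Ioo (0:ℝ) r := ⟨hx.1, lt_of_le_of_ne hx.2 hxr⟩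
        exact (hFderiv x hx').deriv
      exact ((measurable_deriv F).aestronglyMeasurable.restrict).congr hae
    have hint : IntervalIntegrable h MeasureTheory.volume 0 r := by
      rw [intervalIntegrable_iff_integrableOn_Ioc_of_le (le_of_lt hr0)]
      refine MeasureTheory.Integrable.mono' (MeasureTheory.integrable_const C) hmeas ?_
      filter_upwards [MeasureTheory.ae_restrict_mem measurableSet_Ioc] with x hx
      have hb := hbound x ⟨hx.1, le_trans hx.2 hr1⟩
      have hx1 : x ^ (N - 1) ≤ 1 :=
        pow_le_one₀ (le_of_lt hx.1) (le_trans hx.2 hr1)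
      calc ‖h x‖ = |h x| := rfl
        _ ≤ C * x ^ (N - 1) := hb
        _ ≤ C * 1 := by nlinarith
        _ = C := mul_one C
    -- FTC
    have hFTC : ∫ t in (0:ℝ)..r, h t = F r - F 0 :=
      intervalIntegral.integral_eq_sub_of_hasDeriv_right_of_le (le_of_lt hr0)
        (hFcont.mono (Set.Icc_subset_Icc le_rfl hr1))
        (fun t ht => (hFderiv t ht).hasDerivWithinAt) hint
    have hF0 : F 0 = 0 := by
      simp only [hFdef]
      simp [zero_pow (show N - 1 ≠ 0 by omega)]
    -- bound the integral
    have hBint : IntervalIntegrable (fun t => C * t ^ (N - 1)) MeasureTheory.volume 0 r :=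
      (intervalIntegral.intervalIntegrable_pow _).const_mul C
    have habs : |F r| ≤ ∫ t in (0:ℝ)..r, C * t ^ (N - 1) := by
      have h1 : ‖∫ t in (0:ℝ)..r, h t‖ ≤ ∫ t in (0:ℝ)..r, ‖h t‖ :=
        intervalIntegral.norm_integral_le_integral_norm (le_of_lt hr0)
      have h2 : (∫ t in (0:ℝ)..r, ‖h t‖) ≤ ∫ t in (0:ℝ)..r, C * t ^ (N - 1) := by
        refine intervalIntegral.integral_mono_on (le_of_lt hr0) hint.norm hBint ?_
        intro x hx
        rcases eq_or_lt_of_le hx.1 with h0 | h0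
        · have hx0 : h x = 0 := by
            simp only [hhdef, ← h0]
            simp [zero_pow (show N - 1 ≠ 0 by omega)]
          rw [hx0, ← h0]
          simp [zero_pow (show N - 1 ≠ 0 by omega)]
        · exact hbound x ⟨h0, le_trans hx.2 hr1⟩
      calc |F r| = ‖F r - F 0‖ := by rw [hF0, sub_zero]; rfl
        _ = ‖∫ t in (0:ℝ)..r, h t‖ := by rw [hFTC]
        _ ≤ _ := le_trans h1 h2
    have hval : (∫ t in (0:ℝ)..r, C * t ^ (N - 1)) = C * (r ^ N / N) := by
      have hNe : N - 1 + 1 = N := by omega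
      rw [intervalIntegral.integral_const_mul, integral_pow, hNe]
      rw [show ((N - 1 : ℕ) : ℝ) + 1 = (N : ℝ) by
        push_cast [Nat.cast_sub (show 1 ≤ N by omega)]; ring]
      simp [zero_pow (show N ≠ 0 by omega)]
    -- conclude
    have hrpow : (0:ℝ) < r ^ (N - 1) := pow_pos hr0 _
    have hfin : |F r| ≤ C * r ^ (N - 1) := by
      rw [hval] at habs
      refine le_trans habs ?_
      have hNpos : (1:ℝ) ≤ (N:ℝ) := by exact_mod_cast Nat.one_le_of_lt hN
      have h2 : r ^ N ≤ r ^ (N - 1) := by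
        have hrNN : r ^ N = r ^ (N - 1) * r := by
          rw [← pow_succ]; congr 1; omega
        nlinarith [pow_pos hr0 (N - 1)]
      have h3 : r ^ N / (N:ℝ) ≤ r ^ N :=
        div_le_self (pow_nonneg (le_of_lt hr0) _) hNpos
      nlinarith
    have hFr : |F r| = r ^ (N - 1) * |d r| := by
      simp only [hFdef]
      rw [abs_mul, abs_pow, abs_of_nonneg (le_of_lt hr0)]
    rw [hFr] at hfin
    exact (mul_le_mul_iff_left₀ hrpow).mp (by linarith : |d r| * r ^ (N - 1) ≤ C * r ^ (N - 1))
  -- final assembly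
  intro r hr
  rcases eq_or_lt_of_le hr.1 with h0 | h0
  · rw [← h0, hbc]; simpa using hC
  by_cases hdiff : DifferentiableAt ℝ y r
  · rw [← hdiff.derivWithin (uniqueDiffOn_Icc zero_lt_one r hr)]
    exact key r ⟨h0, hr.2⟩
  · rw [deriv_zero_of_not_differentiableAt hdiff]; simpa using hC
end
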